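/- Let $n > 1$ and let $X = \{x \in \mathbb{Q}_p : \gamma_1 < v(x) < \gamma_2 \text{ and } \lambda x \in P_n\}$ where $\lambda \in \mathbb{Q}_p^\times$, $\gamma_1 < \gamma_2$ in $\mathbb{Z} \cup \{\pm\infty\}$, and $P_n$ is the set of nonzero $n$-th powers. If $y_0 \in X$ satisfies $v(y_0) + 2v(n) < -2$, then the closed ball $\{x : v(x - y_0) \geq -1\}$ is contained in $X$. -/

import Mathlib

/-- If `X = {x ∈ ℚ_p : γ₁ < v(x) < γ₂ ∧ λx ∈ P_n}` and `y₀ ∈ X` satisfies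
`v(y₀) + 2v(n) < -2`, then the closed ball `{x : v(x - y₀) ≥ -1}` is contained
in `X`. -/
theorem closed_ball_in_Pn_cell {p : ℕ} [Fact p.Prime] (n : ℕ) (hn : 1 < n)
    (lam : ℚ_[p]) (hlam : lam ≠ 0) (γ₁ γ₂ : WithBot (WithTop ℤ)) (hγ : γ₁ < γ₂)
    (X : Set ℚ_[p])
    (hX : X = {x : ℚ_[p] | γ₁ < (Padic.addValuation x : WithBot (WithTop ℤ)) ∧
      (Padic.addValuation x : WithBot (WithTop ℤ)) < γ₂ ∧
      ∃ z : ℚ_[p], z ≠ 0 ∧ lam * x = z ^ n})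
    (y₀ : ℚ_[p]) (hy₀ : y₀ ∈ X)
    (hval : Padic.addValuation y₀ + 2 • Padic.addValuation (n : ℚ_[p]) <
      ((-2 : ℤ) : WithTop ℤ)) :
    {x : ℚ_[p] | ((-1 : ℤ) : WithTop ℤ) ≤ Padic.addValuation (x - y₀)} ⊆ X := by
  subst hX
  obtain ⟨h1, h2, z, hz, hzn⟩ := hy₀
  intro x hx
  have hp1 : (1 : ℝ) < (p : ℝ) := by exact_mod_cast (Fact.out : p.Prime).one_lt
  have hp0 : (0 : ℝ) < (p : ℝ) := lt_trans one_pos hp1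
  have hn0 : (n : ℚ_[p]) ≠ 0 := Nat.cast_ne_zero.mpr (by omega)
  have hy0 : y₀ ≠ 0 := by
    intro h
    rw [h, mul_zero] at hzn
    exact hz ((pow_eq_zero_iff (by omega)).mp hzn.symm)
  -- valuation inequality in ℤ
  have hvalZ : y₀.valuation + 2 * (n : ℚ_[p]).valuation < -2 := by
    rw [Padic.addValuation.apply hy0, Padic.addValuation.apply hn0, two_nsmul,
      ← WithTop.coe_add, ← WithTop.coe_add] at hval
    have := WithTop.coe_lt_coe.mp hval
    omega
  -- v(n) ≥ 0
  have hvn : 0 ≤ (n : ℚ_[p]).valuation := by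
    have hle : ‖(n : ℚ_[p])‖ ≤ 1 := by
      simpa using Padic.norm_int_le_one (p := p) (n : ℤ)
    rw [Padic.norm_eq_zpow_neg_valuation hn0] at hle
    by_contra hcon
    push_neg at hcon
    have := zpow_lt_zpow_right₀ hp1 (show (0 : ℤ) < -(n : ℚ_[p]).valuation by omega)
    simp only [zpow_zero] at this
    linarith
  by_cases hxy : x = y₀
  · subst hxy; exact ⟨h1, h2, z, hz, hzn⟩
  have hd0 : x - y₀ ≠ 0 := sub_ne_zero.mpr hxy
  have hd : (-1 : ℤ) ≤ (x - y₀).valuation := by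
    rw [Set.mem_setOf_eq, Padic.addValuation.apply hd0] at hx
    exact_mod_cast hx
  -- norms
  have hny : ‖y₀‖ = (p : ℝ) ^ (-y₀.valuation) := Padic.norm_eq_zpow_neg_valuation hy0
  have hnd : ‖x - y₀‖ = (p : ℝ) ^ (-(x - y₀).valuation) := Padic.norm_eq_zpow_neg_valuation hd0
  have hdlt : ‖x - y₀‖ < ‖y₀‖ := by
    rw [hny, hnd]
    exact zpow_lt_zpow_right₀ hp1 (by omega)
  have hxnorm : ‖x‖ = ‖y₀‖ := by
    have hxe : x = y₀ + (x - y₀) := by ring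
    calc ‖x‖ = ‖y₀ + (x - y₀)‖ := by rw [← hxe]
    _ = max ‖y₀‖ ‖x - y₀‖ := Padic.add_eq_max_of_ne (ne_of_gt hdlt)
    _ = ‖y₀‖ := max_eq_left hdlt.le
  have hx0 : x ≠ 0 := by
    intro h
    rw [h, norm_zero] at hxnorm
    exact hy0 (norm_eq_zero.mp hxnorm.symm)
  -- valuations of x and y₀ agree
  have hvx : x.valuation = y₀.valuation := by
    have := hxnorm
    rw [Padic.norm_eq_zpow_neg_valuation hx0, hny] at this
    have := zpow_right_injective₀ hp0 (ne_of_gt hp1) this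
    omega
  have haddval : (Padic.addValuation x : WithTop ℤ) = Padic.addValuation y₀ := by
    rw [Padic.addValuation.apply hx0, Padic.addValuation.apply hy0, hvx]
  refine ⟨by rw [haddval]; exact h1, by rw [haddval]; exact h2, ?_⟩
  -- Hensel part
  set u : ℚ_[p] := x / y₀ with hu
  have hunorm : ‖u‖ = 1 := by
    rw [hu, norm_div, hxnorm, div_self (by simpa using hy0)]
  have hu1 : ‖u - 1‖ = ‖x - y₀‖ / ‖y₀‖ := by
    rw [← norm_div, hu, sub_div, div_self hy0]
  have hnn : ‖(n : ℚ_[p])‖ = (p : ℝ) ^ (-(n : ℚ_[p]).valuation) := Padic.norm_eq_zpow_neg_valuation hn0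
  have hkey : ‖u - 1‖ < ‖(n : ℚ_[p])‖ ^ 2 := by
    rw [hu1, hnd, hny, hnn, ← zpow_natCast ((p:ℝ) ^ _), ← zpow_mul, ← zpow_sub₀ (ne_of_gt hp0)]
    exact zpow_lt_zpow_right₀ hp1 (by push_cast; omega)
  have humem : ‖u‖ ≤ 1 := le_of_eq hunorm
  set U : ℤ_[p] := ⟨u, humem⟩ with hU
  set F : Polynomial ℤ_[p] := Polynomial.X ^ n - Polynomial.C U with hF
  have heval : F.eval 1 = 1 - U := by
    simp [hF]
  have hderiv : F.derivative.eval 1 = (n : ℤ_[p]) := by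
    simp [hF, Polynomial.derivative_X_pow]
  have hnormF : ‖F.eval 1‖ < ‖F.derivative.eval 1‖ ^ 2 := by
    rw [heval, hderiv]
    have e1 : ‖(1 - U : ℤ_[p])‖ = ‖u - 1‖ := by
      rw [PadicInt.norm_def]
      push_cast
      rw [norm_sub_rev]
    have e2 : ‖(n : ℤ_[p])‖ = ‖(n : ℚ_[p])‖ := by
      rw [PadicInt.norm_def]; push_cast; rfl
    rw [e1, e2]; exact hkey
  obtain ⟨Z, hZ, -⟩ := hensels_lemma hnormF
  have hZn : (Z : ℚ_[p]) ^ n = u := by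
    have : Z ^ n = U := by
      have := hZ
      simp only [hF, Polynomial.eval_sub, Polynomial.eval_pow, Polynomial.eval_X,
        Polynomial.eval_C, map_sub, map_pow, Polynomial.aeval_X, Polynomial.aeval_C,
        Algebra.algebraMap_self, RingHom.id_apply, sub_eq_zero] at this
      exact this
    calc (Z : ℚ_[p]) ^ n = ((Z ^ n : ℤ_[p]) : ℚ_[p]) := by push_cast; ring
    _ = ((U : ℤ_[p]) : ℚ_[p]) := by rw [this]
    _ = u := rfl
  have hZ0 : (Z : ℚ_[p]) ≠ 0 := by
    intro h
    have : u = 0 := by rw [← hZn, h, zero_pow (by omega)]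
    rw [this, norm_zero] at hunorm
    norm_num at hunorm
  refine ⟨z * Z, mul_ne_zero hz hZ0, ?_⟩
  have hxu : x = y₀ * u := by
    rw [hu, mul_div_cancel₀ _ hy0]
  rw [hxu, ← mul_assoc, hzn, ← hZn, mul_pow]
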